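/- Let $\sigma_n$ be a uniformly random sticky map $T_n \to C_n$ (generated by i.i.d. fair $\{0,2\}$-valued edge labels $r_{t,a}$ on the ternary tree, with the $j$-th digit of $\sigma_n(s)$ equal to $r_{\pi^{j-1}(s), \pi_j(s)}$). Fix $t \in (1/3, 1)$ and $y \in \mathbb{R}$. Then the probability $P_n(t,y)$ that $(t,y) \in K_{\sigma_n}$ is at most the survival probability of Bernoulli$(1/2)$ bond percolation on the tree $T^*_{n,t,y}$ (the subtree of vertices $s$ with $c_{t,y}(s)$ finite), i.e., the probability that after independently deleting each edge with probability $1/2$, a path remains from the root to depth $n$. -/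

import Mathlib

open scoped ENNReal Classical

/-- A subtree of the rooted ternary tree of depth `n`: vertices are ternary
strings (lists over `Fin 3`), it contains the root (the empty string), is closed
under taking prefixes, and has depth at most `n`. -/
def IsSubtree (n : ℕ) (T : List (Fin 3) → Prop) : Prop :=
  T [] ∧ (∀ l a, T (l ++ [a]) → T l) ∧ ∀ l, T l → l.length ≤ n

/-- The edges of the full rooted ternary tree of depth `n`, indexed by their
lower endpoint: the edge at depth `k+1` is determined by a vertex at depth
`k+1`, i.e. a string of length `k+1`. -/
def TernaryEdges (n : ℕ) := Σ k : Fin n, (Fin (k + 1) → Fin 3)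

/-- The percolation configuration `ω` (`true` = edge retained) admits a fully
retained path from the root to a depth-`n` vertex of `T`. -/
def Survives (n : ℕ) (T : List (Fin 3) → Prop) (ω : TernaryEdges n → Bool) : Prop :=
  ∃ s : Fin n → Fin 3, T (List.ofFn s) ∧
    ∀ k : Fin n, ω ⟨k, fun i => s (Fin.castLE k.isLt i)⟩ = true

/-- The survival probability of Bernoulli(1/2) bond percolation on the subtree
`T` of the depth-`n` ternary tree: each edge is removed independently with
probability 1/2 (configurations are uniform), and we ask for a retained path
from the root to depth `n`. -/
noncomputable def survivalProb (n : ℕ) (T : List (Fin 3) → Prop) : ℝ :=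
  (Nat.card {ω : TernaryEdges n → Bool // Survives n T ω} : ℝ) /
    (Nat.card (TernaryEdges n → Bool) : ℝ)

open MeasureTheory
open scoped ENNReal

/-- The real number `∑ s j / 3^(j+1)` associated to the ternary string `s`. -/
noncomputable def valF {n : ℕ} (s : Fin n → Fin 3) : ℝ :=
  ∑ j : Fin n, (s j : ℝ) / 3 ^ ((j : ℕ) + 1)

/-- A map `σ : T_n → C_n` is sticky if its values have all ternary digits in
`{0, 2}` and the `j`-th digit of `σ s` depends only on the first `j` digits
of `s`. -/
def Sticky {n : ℕ} (σ : (Fin n → Fin 3) → (Fin n → Fin 3)) : Prop :=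
  (∀ s j, σ s j ≠ 1) ∧
    ∀ s₁ s₂ : Fin n → Fin 3, ∀ j : Fin n,
      (∀ i : Fin n, i ≤ j → s₁ i = s₂ i) → σ s₁ j = σ s₂ j

/-- The parallelogram (thin tube) over `0 ≤ x ≤ 1` with `y`-intercept `b`,
slope `v` and vertical thickness `3 ^ (-(n+1))`: its corners are `(0, b)`,
`(0, b + 3^{-(n+1)})`, `(1, b + v)`, `(1, b + v + 3^{-(n+1)})`. -/
def tube (n : ℕ) (b v : ℝ) : Set (ℝ × ℝ) :=
  {p | 0 ≤ p.1 ∧ p.1 ≤ 1 ∧ b + v * p.1 ≤ p.2 ∧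
    p.2 ≤ b + v * p.1 + 1 / 3 ^ (n + 1)}

/-- The parallelogram `P_{σ,s}` with corners `(0, s/3)`, `(0, s/3 + 3^{-(n+1)})`,
`(1, s/3 + σ(s))`, `(1, s/3 + 3^{-(n+1)} + σ(s))`. -/
noncomputable def Ptube {n : ℕ} (σ : (Fin n → Fin 3) → (Fin n → Fin 3))
    (s : Fin n → Fin 3) : Set (ℝ × ℝ) :=
  tube n (valF s / 3) (valF (σ s))

/-- The "Kakeya set" `K_σ` associated to a sticky map `σ`. -/
noncomputable def Kset {n : ℕ} (σ : (Fin n → Fin 3) → (Fin n → Fin 3)) :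
    Set (ℝ × ℝ) :=
  ⋃ s : Fin n → Fin 3, Ptube σ s

/-- The vertical strip `S_j = [3^{-j}, 3^{1-j}] × ℝ`. -/
def strip (j : ℕ) : Set (ℝ × ℝ) :=
  Set.Icc ((3 : ℝ) ^ (-(j : ℤ))) ((3 : ℝ) ^ (1 - (j : ℤ))) ×ˢ Set.univ

/-- The real number `.a₁a₂…a_k = ∑ a_j / 3^j` associated to a ternary string
given as a list of digits. -/
noncomputable def val3 : List (Fin 3) → ℝ
  | [] => 0
  | a :: l => ((a : ℝ) + val3 l) / 3


/-- The i.i.d. fair edge labels `r` on the ternary tree determine a (uniformly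
random) sticky map: the `j`-th digit of `σ s` is `2` or `0` according to the
label of the edge from `π^(j-1) s` to `π^j s`. -/
def sigmaOf (n : ℕ) (r : TernaryEdges n → Bool) :
    (Fin n → Fin 3) → (Fin n → Fin 3) := fun s j =>
  if r ⟨j, fun i => s (Fin.castLE j.isLt i)⟩ then 2 else 0

/-- `P_n(t, y)`: the probability, over a uniformly random sticky map
`σ = sigmaOf n r`, that `(t, y) ∈ K_σ`. -/
noncomputable def Pn (n : ℕ) (t y : ℝ) : ℝ :=
  (Nat.card {r : TernaryEdges n → Bool // (t, y) ∈ Kset (sigmaOf n r)} : ℝ) /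
    (Nat.card (TernaryEdges n → Bool) : ℝ)

/-- The tree `T^*_{n,t,y}`: the set of ternary strings `s` of length `≤ n`
admitting some `c ∈ C_k` (`k` the length of `s`) with `y ∈ I_{s,c,t}`,
i.e. `c_{t,y}(s)` is finite. -/
def inTree (n : ℕ) (t y : ℝ) (l : List (Fin 3)) : Prop :=
  l.length ≤ n ∧ ∃ c : List (Fin 3), c.length = l.length ∧
    (∀ d ∈ c, d ≠ 1) ∧
    val3 l / 3 + t * val3 c ≤ y ∧
    y ≤ val3 l / 3 + (1 + 3 * t) / 3 ^ (l.length + 1) + t * val3 c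

namespace PnProofAux

lemma val3_nonneg (l : List (Fin 3)) : 0 ≤ val3 l := by
  induction l with
  | nil => simp [val3]
  | cons a l ih =>
    have : (0:ℝ) ≤ (a:ℝ) := by positivity
    simp only [val3]
    linarith

lemma val3_le (l : List (Fin 3)) : val3 l ≤ 1 - (1/3:ℝ) ^ l.length := by
  induction l with
  | nil => simp [val3]
  | cons a l ih =>
    have ha : (a:ℝ) ≤ 2 := by
      fin_cases a <;> norm_num
    simp only [val3, List.length_cons, pow_succ]
    nlinarith [pow_pos (by norm_num : (0:ℝ) < 1/3) l.length]

lemma val3_append (l m : List (Fin 3)) :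
    val3 (l ++ m) = val3 l + val3 m / 3 ^ l.length := by
  induction l with
  | nil => simp [val3]
  | cons a l ih =>
    rw [List.cons_append]
    show ((a:ℝ) + val3 (l ++ m)) / 3 = ((a:ℝ) + val3 l) / 3 + _
    rw [ih, List.length_cons, pow_succ]
    field_simp
    ring

lemma val3_ofFn : ∀ {n : ℕ} (f : Fin n → Fin 3), val3 (List.ofFn f) = valF f := by
  intro n
  induction n with
  | zero => intro f; simp [valF, val3]
  | succ m ih =>
    intro f
    rw [List.ofFn_succ]
    show ((f 0 : ℝ) + val3 (List.ofFn fun i => f i.succ)) / 3 = _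
    rw [ih]
    have h : ∀ i : Fin m, ((f i.succ : ℝ)) / 3 ^ ((i.succ : ℕ) + 1)
        = ((f i.succ : ℝ) / 3 ^ ((i : ℕ) + 1)) / 3 := fun i => by
      rw [Fin.val_succ, div_div, ← pow_succ]
    unfold valF
    rw [Fin.sum_univ_succ, Finset.sum_congr rfl fun i _ => h i, ← Finset.sum_div]
    simp only [Fin.val_zero, pow_one]
    ring

lemma val3_sub_ge : ∀ (c₁ c₂ : List (Fin 3)), c₁.length = c₂.length →
    (∀ d ∈ c₁, d ≠ 1) → (∀ d ∈ c₂, d ≠ 1) → c₁ ≠ c₂ →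
    2 / 3 ^ c₁.length ≤ |val3 c₁ - val3 c₂| := by
  intro c₁
  induction c₁ with
  | nil =>
    intro c₂ hlen _ _ hne
    cases c₂ with
    | nil => exact absurd rfl hne
    | cons b l₂ => simp at hlen
  | cons a l₁ ih =>
    intro c₂ hlen h1 h2 hne
    cases c₂ with
    | nil => simp at hlen
    | cons b l₂ =>
      have hlen' : l₁.length = l₂.length := by simpa using hlen
      have hval : val3 (a :: l₁) - val3 (b :: l₂)
          = (((a:ℝ) - b) + (val3 l₁ - val3 l₂)) / 3 := by
        simp only [val3]; ring
      by_cases hab : a = b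
      · have hne' : l₁ ≠ l₂ := by
          intro h; exact hne (by rw [hab, h])
        have := ih l₂ hlen' (fun d hd => h1 d (List.mem_cons_of_mem _ hd))
          (fun d hd => h2 d (List.mem_cons_of_mem _ hd)) hne'
        rw [hval, hab, sub_self, zero_add, abs_div]
        rw [abs_of_nonneg (by norm_num : (0:ℝ) ≤ 3)]
        simp only [List.length_cons, pow_succ]
        rw [div_le_iff₀ (by positivity : (0:ℝ) < 3 ^ l₁.length)] at this
        rw [div_le_div_iff₀ (by positivity) (by norm_num)]
        nlinarith [pow_pos (by norm_num : (0:ℝ) < 3) l₁.length]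
      · have ha1 : a ≠ 1 := h1 a List.mem_cons_self
        have hb1 : b ≠ 1 := h2 b List.mem_cons_self
        have habs : |(a:ℝ) - b| = 2 := by
          fin_cases a <;> fin_cases b <;> simp_all <;> norm_num
        have hd1 : |val3 l₁ - val3 l₂| ≤ 1 - (1/3:ℝ) ^ l₁.length := by
          rw [abs_sub_le_iff]
          constructor
          · have := val3_le l₁; have := val3_nonneg l₂; linarith
          · have := val3_le l₂; have := val3_nonneg l₁
            rw [hlen']; linarith
        have key : 2 - (1 - (1/3:ℝ) ^ l₁.length)
            ≤ |((a:ℝ) - b) + (val3 l₁ - val3 l₂)| := by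
          have := abs_add_le (((a:ℝ) - b) + (val3 l₁ - val3 l₂)) (-(val3 l₁ - val3 l₂))
          simp only [add_neg_cancel_right, abs_neg] at this
          rw [habs] at this
          linarith
        rw [hval, abs_div, abs_of_nonneg (by norm_num : (0:ℝ) ≤ 3)]
        simp only [List.length_cons, pow_succ]
        have h3p : (0:ℝ) < 3 ^ l₁.length := by positivity
        have hu : (1/3:ℝ) ^ l₁.length = 1 / 3 ^ l₁.length := by
          rw [div_pow, one_pow]
        rw [hu] at key
        rw [div_le_div_iff₀ (by positivity) (by norm_num)]
        have h1p : (1:ℝ) ≤ 3 ^ l₁.length := one_le_pow₀ (by norm_num)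
        have hcancel : (1 / 3 ^ l₁.length) * 3 ^ l₁.length = (1:ℝ) :=
          one_div_mul_cancel (ne_of_gt h3p)
        nlinarith [mul_le_mul_of_nonneg_right key
          (by positivity : (0:ℝ) ≤ 3 ^ l₁.length * 3)]

/-- The condition that `y ∈ I_{l,c,t}` with `c ∈ C_k`, `k = l.length`. -/
def MatchC (t y : ℝ) (l c : List (Fin 3)) : Prop :=
  c.length = l.length ∧ (∀ d ∈ c, d ≠ 1) ∧
    val3 l / 3 + t * val3 c ≤ y ∧
    y ≤ val3 l / 3 + (1 + 3 * t) / 3 ^ (l.length + 1) + t * val3 c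

lemma matchC_unique {t y : ℝ} (ht : 1 / 3 < t) {l c₁ c₂ : List (Fin 3)}
    (h1 : MatchC t y l c₁) (h2 : MatchC t y l c₂) : c₁ = c₂ := by
  by_contra hne
  obtain ⟨hl1, hd1, hlo1, hhi1⟩ := h1
  obtain ⟨hl2, hd2, hlo2, hhi2⟩ := h2
  set k := l.length
  have hlen : c₁.length = c₂.length := by rw [hl1, hl2]
  have hgap := val3_sub_ge c₁ c₂ hlen hd1 hd2 hne
  rw [hl1] at hgap
  have hkp : (0:ℝ) < 3 ^ k := by positivity
  have hk1 : (3:ℝ) ^ (k + 1) = 3 ^ k * 3 := pow_succ 3 k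
  have habs : |t * (val3 c₁ - val3 c₂)| ≤ (1 + 3 * t) / 3 ^ (k + 1) := by
    rw [abs_le]
    constructor <;> [nlinarith; nlinarith]
  have ht0 : (0:ℝ) < t := by linarith
  rw [mul_sub] at habs
  have habs' : t * |val3 c₁ - val3 c₂| ≤ (1 + 3 * t) / 3 ^ (k + 1) := by
    have he : t * |val3 c₁ - val3 c₂| = |t * val3 c₁ - t * val3 c₂| := by
      rw [← mul_sub, abs_mul, abs_of_pos ht0]
    rw [he]; exact habs
  have h1' : t * (2 / 3 ^ k) ≤ t * |val3 c₁ - val3 c₂| :=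
    mul_le_mul_of_nonneg_left hgap ht0.le
  rw [le_div_iff₀ (by positivity : (0:ℝ) < 3 ^ (k+1))] at habs'
  have h6 : t * (2 / 3 ^ k) * 3 ^ (k + 1) = 6 * t := by
    rw [hk1]; field_simp; ring
  nlinarith [mul_le_mul_of_nonneg_right h1'
    (by positivity : (0:ℝ) ≤ 3 ^ (k + 1))]

lemma matchC_prefix {t y : ℝ} (ht0 : 0 ≤ t) {n : ℕ} (l c : List (Fin 3))
    (hl : l.length = n) (hc : c.length = n) (hcd : ∀ d ∈ c, d ≠ 1)
    (hlo : val3 l / 3 + t * val3 c ≤ y)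
    (hhi : y ≤ val3 l / 3 + t * val3 c + 1 / 3 ^ (n + 1))
    (k : ℕ) (hk : k ≤ n) : MatchC t y (l.take k) (c.take k) := by
  have hlt : (l.take k).length = k := by
    rw [List.length_take, hl, min_eq_left hk]
  have hct : (c.take k).length = k := by
    rw [List.length_take, hc, min_eq_left hk]
  have hld : l = l.take k ++ l.drop k := (List.take_append_drop k l).symm
  have hcd' : c = c.take k ++ c.drop k := (List.take_append_drop k c).symm
  have hvl : val3 l = val3 (l.take k) + val3 (l.drop k) / 3 ^ k := by
    conv_lhs => rw [hld]
    rw [val3_append, hlt]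
  have hvc : val3 c = val3 (c.take k) + val3 (c.drop k) / 3 ^ k := by
    conv_lhs => rw [hcd']
    rw [val3_append, hct]
  have hldl : (l.drop k).length = n - k := by rw [List.length_drop, hl]
  have hcdl : (c.drop k).length = n - k := by rw [List.length_drop, hc]
  have hm0 : 0 ≤ val3 (l.drop k) := val3_nonneg _
  have hm0' : 0 ≤ val3 (c.drop k) := val3_nonneg _
  have hm1 : val3 (l.drop k) ≤ 1 - (1/3:ℝ) ^ (n - k) := by
    have := val3_le (l.drop k); rwa [hldl] at this
  have hm1' : val3 (c.drop k) ≤ 1 - (1/3:ℝ) ^ (n - k) := by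
    have := val3_le (c.drop k); rwa [hcdl] at this
  have hA : (0:ℝ) < 3 ^ k := by positivity
  have hB : (0:ℝ) < 3 ^ (n - k) := by positivity
  have hAB : (3:ℝ) ^ n = 3 ^ k * 3 ^ (n - k) := by
    rw [← pow_add, Nat.add_sub_cancel' hk]
  have hub : (1/3:ℝ) ^ (n - k) = 1 / 3 ^ (n - k) := by rw [div_pow, one_pow]
  rw [hub] at hm1 hm1'
  have hBinv : (1 / 3 ^ (n - k)) * 3 ^ (n - k) = (1:ℝ) :=
    one_div_mul_cancel (ne_of_gt hB)
  refine ⟨by rw [hlt, hct], fun d hd => hcd d (List.mem_of_mem_take hd), ?_, ?_⟩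
  · calc val3 (l.take k) / 3 + t * val3 (c.take k)
        ≤ val3 l / 3 + t * val3 c := by
          rw [hvl, hvc]
          have h1 : 0 ≤ val3 (l.drop k) / 3 ^ k / 3 := by positivity
          have h2 : 0 ≤ t * (val3 (c.drop k) / 3 ^ k) :=
            mul_nonneg ht0 (by positivity)
          nlinarith
      _ ≤ y := hlo
  · rw [hlt]
    rw [hvl, hvc] at hhi
    have hkn1 : (3:ℝ) ^ (n + 1) = 3 ^ k * 3 ^ (n - k) * 3 := by
      rw [pow_succ, hAB]
    have hk1 : (3:ℝ) ^ (k + 1) = 3 ^ k * 3 := pow_succ 3 k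
    -- key arithmetic estimate
    have key : val3 (l.drop k) / 3 ^ k / 3 + t * (val3 (c.drop k) / 3 ^ k)
        + 1 / 3 ^ (n + 1) ≤ (1 + 3 * t) / 3 ^ (k + 1) := by
      rw [hkn1, hk1]
      have hAne : ((3:ℝ)^k) ≠ 0 := ne_of_gt hA
      have hBne : ((3:ℝ)^(n-k)) ≠ 0 := ne_of_gt hB
      rw [le_div_iff₀ (by positivity : (0:ℝ) < 3 ^ k * 3)]
      have expand : (val3 (l.drop k) / 3 ^ k / 3 + t * (val3 (c.drop k) / 3 ^ k)
            + 1 / (3 ^ k * 3 ^ (n - k) * 3)) * (3 ^ k * 3)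
          = val3 (l.drop k) + 3 * t * val3 (c.drop k) + 1 / 3 ^ (n - k) := by
        field_simp
      rw [expand]
      have e2 : 3 * t * val3 (c.drop k) ≤ 3 * t * (1 - 1 / 3 ^ (n - k)) :=
        mul_le_mul_of_nonneg_left hm1' (by linarith)
      have e3 : 0 ≤ t * (1 / 3 ^ (n - k)) :=
        mul_nonneg ht0 (by positivity)
      linarith
    linarith

lemma ofFn_take {n k : ℕ} (h : k ≤ n) (f : Fin n → Fin 3) :
    List.ofFn (fun i : Fin k => f (Fin.castLE h i)) = (List.ofFn f).take k := by
  apply List.ext_getElem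
  · simp [h]
  · intro i h1 h2
    simp [List.getElem_take, List.getElem_ofFn, Fin.castLE]

end PnProofAux

open PnProofAux in
theorem Pn_le_survivalProb' (n : ℕ) (t y : ℝ) (ht : 1 / 3 < t) (ht1 : t < 1) :
    Pn n t y ≤ survivalProb n (inTree n t y) := by
  classical
  have ht0 : (0:ℝ) ≤ t := by linarith
  let B : TernaryEdges n → Bool := fun e =>
    if (∃ c, MatchC t y (List.ofFn e.2) c ∧ c.getD e.1 0 = 2)
    then true else false
  let Φ : (TernaryEdges n → Bool) → (TernaryEdges n → Bool) :=
    fun r e => r e == B e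
  have hΦΦ : ∀ r, Φ (Φ r) = r := by
    intro r; funext e
    show ((r e == B e) == B e) = r e
    cases r e <;> cases B e <;> rfl
  have hΦinj : Function.Injective Φ := Function.LeftInverse.injective hΦΦ
  have hmaps : ∀ r : TernaryEdges n → Bool, (t, y) ∈ Kset (sigmaOf n r) →
      Survives n (inTree n t y) (Φ r) := by
    intro r hr
    obtain ⟨s, hs⟩ := Set.mem_iUnion.mp hr
    obtain ⟨-, -, hlo, hhi⟩ := hs
    set L : List (Fin 3) := List.ofFn s with hLdef
    set C : List (Fin 3) := List.ofFn (sigmaOf n r s) with hCdef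
    have hL : L.length = n := List.length_ofFn
    have hC : C.length = n := List.length_ofFn
    have hCd : ∀ d ∈ C, d ≠ 1 := by
      intro d hd
      rw [hCdef, List.mem_ofFn] at hd
      obtain ⟨i, rfl⟩ := hd
      show sigmaOf n r s i ≠ 1
      unfold sigmaOf
      split <;> decide
    have hvl : val3 L = valF s := val3_ofFn s
    have hvc : val3 C = valF (sigmaOf n r s) := val3_ofFn _
    have hlo' : val3 L / 3 + t * val3 C ≤ y := by
      rw [hvl, hvc]; nlinarith [hlo]
    have hhi' : y ≤ val3 L / 3 + t * val3 C + 1 / 3 ^ (n + 1) := by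
      rw [hvl, hvc]; nlinarith [hhi]
    have hKey : ∀ k, k ≤ n → MatchC t y (L.take k) (C.take k) :=
      matchC_prefix ht0 L C hL hC hCd hlo' hhi'
    have hMfull : MatchC t y L C := by
      have h := hKey n le_rfl
      rwa [show L.take n = L by rw [← hL, List.take_length],
        show C.take n = C by rw [← hC, List.take_length]] at h
    have hBr : ∀ k : Fin n,
        B ⟨k, fun i => s (Fin.castLE k.isLt i)⟩
          = r ⟨k, fun i => s (Fin.castLE k.isLt i)⟩ := by
      intro k
      have hk1n : (k:ℕ) + 1 ≤ n := k.isLt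
      set f : Fin ((k:ℕ)+1) → Fin 3 := fun i => s (Fin.castLE k.isLt i) with hfdef
      set Ck : List (Fin 3) :=
        List.ofFn (fun i : Fin ((k:ℕ)+1) => sigmaOf n r s (Fin.castLE hk1n i))
        with hCkdef
      have hof : List.ofFn f = L.take ((k:ℕ)+1) := ofFn_take hk1n s
      have hCk : Ck = C.take ((k:ℕ)+1) := ofFn_take hk1n (sigmaOf n r s)
      have hM : MatchC t y (List.ofFn f) Ck := by
        rw [hof, hCk]; exact hKey _ hk1n
      have hCklen : (k:ℕ) < Ck.length := by
        rw [hCkdef, List.length_ofFn]; exact Nat.lt_succ_self _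
      have hdig : Ck.getD (k:ℕ) 0 = sigmaOf n r s k := by
        rw [List.getD_eq_getElem _ _ hCklen]
        simp only [hCkdef, List.getElem_ofFn]
        congr 1
      have hdig2 : sigmaOf n r s k
          = if r ⟨k, fun i => s (Fin.castLE k.isLt i)⟩ then 2 else 0 := rfl
      by_cases hre : r ⟨k, fun i => s (Fin.castLE k.isLt i)⟩ = true
      · have hex : ∃ c, MatchC t y (List.ofFn f) c ∧ c.getD (k:ℕ) 0 = 2 :=
          ⟨Ck, hM, by rw [hdig, hdig2, if_pos hre]⟩
        show (if _ then true else false) = _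
        rw [if_pos hex, hre]
      · have hre' : r ⟨k, fun i => s (Fin.castLE k.isLt i)⟩ = false := by
          simpa using hre
        have hno : ¬ ∃ c, MatchC t y (List.ofFn f) c ∧ c.getD (k:ℕ) 0 = 2 := by
          rintro ⟨c, hMc, hd⟩
          have hcc : c = Ck := matchC_unique ht hMc hM
          rw [hcc, hdig, hdig2, hre'] at hd
          simp at hd
        show (if _ then true else false) = _
        rw [if_neg hno, hre']
    refine ⟨s, ?_, ?_⟩
    · exact ⟨le_of_eq hL, C, hMfull⟩
    · intro k
      show (r _ == B _) = true
      rw [hBr k]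
      simp
  have hFin : Finite (TernaryEdges n) := by unfold TernaryEdges; infer_instance
  have hFin2 : Finite (TernaryEdges n → Bool) := inferInstance
  have hD : (0:ℝ) < (Nat.card (TernaryEdges n → Bool) : ℝ) := by
    have hne : Nat.card (TernaryEdges n → Bool) ≠ 0 :=
      Nat.card_ne_zero.mpr ⟨⟨fun _ => true⟩, hFin2⟩
    exact_mod_cast Nat.pos_of_ne_zero hne
  have hnum : Nat.card {r : TernaryEdges n → Bool // (t, y) ∈ Kset (sigmaOf n r)}
      ≤ Nat.card {ω : TernaryEdges n → Bool // Survives n (inTree n t y) ω} := by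
    have : Finite {ω : TernaryEdges n → Bool // Survives n (inTree n t y) ω} :=
      Subtype.finite
    exact Nat.card_le_card_of_injective
      (fun p => ⟨Φ p.1, hmaps p.1 p.2⟩)
      (fun p q hpq => Subtype.ext (hΦinj (congrArg Subtype.val hpq)))
  rw [Pn, survivalProb]
  gcongr

/-- Lemma 1.3: for `1/3 < t < 1`, the probability that `(t, y)` lies in the
random Kakeya set `K_{σ_n}` is at most the survival probability of
Bernoulli(1/2) bond percolation on the tree `T^*_{n,t,y}`. -/
theorem Pn_le_survivalProb (n : ℕ) (t y : ℝ) (ht : 1 / 3 < t) (ht1 : t < 1) :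
    Pn n t y ≤ survivalProb n (inTree n t y) :=
  Pn_le_survivalProb' n t y ht ht1
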